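/- The function x ↦ log(cos x) / log((π² − 4x²)/π²) is strictly decreasing on the open interval (0, π/2). -/

import Mathlib

open Real Set

lemma sin_gt_cubic {t : ℝ} (ht : 0 < t) : t - t ^ 3 / 6 < Real.sin t := by
  have H : StrictMonoOn (fun u : ℝ => Real.sin u - u + u ^ 3 / 6) (Ici 0) := by
    apply strictMonoOn_of_deriv_pos (convex_Ici 0)
    · fun_prop
    · intro u hu
      rw [interior_Ici] at hu
      have hd : HasDerivAt (fun u : ℝ => Real.sin u - u + u ^ 3 / 6)
          (Real.cos u - 1 + (3 : ℕ) * u ^ (3 - 1) / 6) u :=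
        ((Real.hasDerivAt_sin u).sub (hasDerivAt_id u)).add ((hasDerivAt_pow 3 u).div_const 6)
      rw [hd.deriv]
      have := Real.one_sub_sq_div_two_lt_cos (x := u) (ne_of_gt hu)
      norm_num
      nlinarith [sq_nonneg u, hu]
  have := H (self_mem_Ici) (le_of_lt ht : (0:ℝ) ≤ t) ht
  simp at this
  nlinarith [this]

set_option maxHeartbeats 1000000 in
lemma core_ineq {t : ℝ} (h0 : 0 < t) (h1 : t < π) :
    t * (π ^ 2 - t ^ 2) < (π ^ 2 + t ^ 2) * Real.sin t := by
  have pl : π < 3.1416 := pi_lt_d4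
  have pg : (3.1415 : ℝ) < π := pi_gt_d4
  rcases le_or_gt t 1.4 with hA | hA
  · have hs := sin_gt_cubic h0
    have hApos : (0:ℝ) < π ^ 2 + t ^ 2 := by positivity
    have h12 : π ^ 2 + t ^ 2 < 12 := by nlinarith
    have step1 : (π ^ 2 + t ^ 2) * (t - t ^ 3 / 6) < (π ^ 2 + t ^ 2) * Real.sin t :=
      mul_lt_mul_of_pos_left hs hApos
    have step2 : t * (π ^ 2 - t ^ 2) ≤ (π ^ 2 + t ^ 2) * (t - t ^ 3 / 6) := by
      nlinarith [mul_nonneg (pow_pos h0 3).le (by linarith : (0:ℝ) ≤ 12 - (π ^ 2 + t ^ 2))]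
    linarith
  rcases le_or_gt (π - 1.35) t with hC | hC
  · obtain ⟨s, hs0, hs1, rfl⟩ : ∃ s, 0 < s ∧ s ≤ 1.35 ∧ t = π - s :=
      ⟨π - t, by linarith, by linarith, by ring⟩
    have hsin : Real.sin (π - s) = Real.sin s := Real.sin_pi_sub s
    rw [hsin]
    have hcub := sin_gt_cubic hs0
    have hApos : (0:ℝ) < π ^ 2 + (π - s) ^ 2 := by positivity
    have step1 : (π ^ 2 + (π - s) ^ 2) * (s - s ^ 3 / 6)
        < (π ^ 2 + (π - s) ^ 2) * Real.sin s := mul_lt_mul_of_pos_left hcub hApos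
    have hps : π * s ≤ 3.1416 * 1.35 := by nlinarith
    have hfac : (0:ℝ) ≤ 2 * π ^ 2 - 2 * π * (1.35 + s) + (1.35 ^ 2 + 1.35 * s + s ^ 2) := by
      nlinarith
    have h6 : s * (2 * π ^ 2 - 2 * π * s + s ^ 2) < 6 * π := by
      nlinarith [mul_nonneg (by linarith : (0:ℝ) ≤ 1.35 - s) hfac, sq_nonneg (π - 3.1416)]
    have step2 : (π - s) * (π ^ 2 - (π - s) ^ 2) ≤ (π ^ 2 + (π - s) ^ 2) * (s - s ^ 3 / 6) := by
      nlinarith [mul_nonneg (sq_nonneg s) (by linarith : (0:ℝ) ≤ 6 * π - s * (2 * π ^ 2 - 2 * π * s + s ^ 2))]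
    linarith
  · have hsin : Real.sin t = Real.cos (t - π / 2) := by
      rw [show t - π / 2 = -(π / 2 - t) by ring, Real.cos_neg, Real.cos_pi_div_two_sub]
    have hcos : 1 - (t - π / 2) ^ 2 / 2 ≤ Real.cos (t - π / 2) :=
      Real.one_sub_sq_div_two_le_cos
    rw [hsin]
    have hApos : (0:ℝ) < π ^ 2 + t ^ 2 := by positivity
    have h2 : t < 1.7916 := by linarith
    have step1 : (π ^ 2 + t ^ 2) * (1 - (t - π / 2) ^ 2 / 2)
        ≤ (π ^ 2 + t ^ 2) * Real.cos (t - π / 2) := mul_le_mul_of_nonneg_left hcos hApos.le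
    have hb : (t - π / 2) ^ 2 ≤ 0.049 := by
      nlinarith [mul_nonneg (by linarith : (0:ℝ) ≤ 0.221 - (t - π / 2))
        (by linarith : (0:ℝ) ≤ (t - π / 2) + 0.221)]
    have hb2 : (π ^ 2 + t ^ 2) * (t - π / 2) ^ 2 ≤ (π ^ 2 + t ^ 2) * 0.049 :=
      mul_le_mul_of_nonneg_left hb hApos.le
    have step2 : t * (π ^ 2 - t ^ 2) < (π ^ 2 + t ^ 2) * (1 - (t - π / 2) ^ 2 / 2) := by
      nlinarith [sq_nonneg (t - 1.52), sq_nonneg (π - 3.1415),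
        mul_nonneg (by linarith : (0:ℝ) ≤ t - 1.4) (by linarith : (0:ℝ) ≤ 1.7916 - t)]
    linarith

-- derivative of the auxiliary function h
lemma h_deriv {x : ℝ} (hx : x ∈ Ioo 0 (π / 2)) :
    ∃ d, HasDerivAt (fun y : ℝ => (π ^ 2 - 4 * y ^ 2) * Real.tan y / (8 * y)) d x ∧ d < 0 := by
  obtain ⟨hx0, hx2⟩ := hx
  have hc : 0 < Real.cos x := Real.cos_pos_of_mem_Ioo ⟨by linarith [pi_pos], hx2⟩
  have h1 : HasDerivAt (fun y : ℝ => π ^ 2 - 4 * y ^ 2) (0 - 4 * (2 * x ^ (2 - 1))) x :=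
    (hasDerivAt_const x (π ^ 2)).sub ((hasDerivAt_pow 2 x).const_mul 4)
  have h2 := h1.mul (Real.hasDerivAt_tan hc.ne')
  have h3 := h2.div ((hasDerivAt_id x).const_mul 8) (by positivity : (8 : ℝ) * x ≠ 0)
  simp only [id_eq, mul_one] at h3
  refine ⟨_, h3, ?_⟩
  have hcore := core_ineq (t := 2 * x) (by linarith) (by linarith)
  rw [Real.sin_two_mul] at hcore
  have hkey : x * (π ^ 2 - 4 * x ^ 2) - Real.sin x * Real.cos x * (π ^ 2 + 4 * x ^ 2) < 0 := by
    nlinarith [hcore]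
  have heq : ((0 - 4 * (2 * x ^ (2 - 1))) * Real.tan x
        + (π ^ 2 - 4 * x ^ 2) * (1 / Real.cos x ^ 2)) * (8 * x)
        - (π ^ 2 - 4 * x ^ 2) * Real.tan x * 8 =
      8 / Real.cos x ^ 2 *
        (x * (π ^ 2 - 4 * x ^ 2) - Real.sin x * Real.cos x * (π ^ 2 + 4 * x ^ 2)) := by
    rw [Real.tan_eq_sin_div_cos]
    field_simp
    ring
  rw [show (((fun y : ℝ => π ^ 2 - 4 * y ^ 2) * Real.tan : ℝ → ℝ) x) = (π ^ 2 - 4 * x ^ 2) * Real.tan x from rfl, heq]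
  have : (0:ℝ) < (8 * x) ^ 2 := by positivity
  have h8 : (0:ℝ) < 8 / Real.cos x ^ 2 := by positivity
  exact div_neg_of_neg_of_pos (mul_neg_of_pos_of_neg h8 hkey) (by positivity)

lemma h_anti : StrictAntiOn (fun y : ℝ => (π ^ 2 - 4 * y ^ 2) * Real.tan y / (8 * y))
    (Ioo 0 (π / 2)) := by
  apply strictAntiOn_of_deriv_neg (convex_Ioo _ _)
  · intro x hx
    exact ((h_deriv hx).choose_spec.1).differentiableAt.continuousAt.continuousWithinAt
  · intro x hx
    rw [interior_Ioo] at hx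
    obtain ⟨d, hd, hneg⟩ := h_deriv hx
    rwa [hd.deriv]

lemma key_ineq {x : ℝ} (hx : x ∈ Ioo 0 (π / 2)) :
    Real.log (Real.cos x) <
      (π ^ 2 - 4 * x ^ 2) * Real.tan x / (8 * x) * Real.log ((π ^ 2 - 4 * x ^ 2) / π ^ 2) := by
  obtain ⟨hx0, hx2⟩ := hx
  set c := (π ^ 2 - 4 * x ^ 2) * Real.tan x / (8 * x) with hc_def
  have hψ : StrictMonoOn
      (fun u : ℝ => -Real.log (Real.cos u) + c * Real.log ((π ^ 2 - 4 * u ^ 2) / π ^ 2))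
      (Icc 0 x) := by
    apply strictMonoOn_of_deriv_pos (convex_Icc _ _)
    · apply ContinuousOn.add
      · apply ContinuousOn.neg
        apply ContinuousOn.log Real.continuous_cos.continuousOn
        intro u hu
        exact (Real.cos_pos_of_mem_Ioo ⟨by linarith [pi_pos, hu.1], by linarith [hu.2]⟩).ne'
      · apply ContinuousOn.mul continuousOn_const
        apply ContinuousOn.log (by fun_prop)
        intro u hu
        have h4 : 4 * u ^ 2 < π ^ 2 := by nlinarith [hu.1, hu.2, pi_pos]
        exact (div_pos (by linarith) (by positivity)).ne'
    · intro u hu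
      rw [interior_Icc] at hu
      obtain ⟨hu0, hux⟩ := hu
      have hu2 : u < π / 2 := by linarith
      have hcu : 0 < Real.cos u := Real.cos_pos_of_mem_Ioo ⟨by linarith [pi_pos], hu2⟩
      have hA : 0 < π ^ 2 - 4 * u ^ 2 := by nlinarith [pi_pos]
      have hd1 : HasDerivAt (fun u : ℝ => -Real.log (Real.cos u))
          (-(-Real.sin u / Real.cos u)) u := ((Real.hasDerivAt_cos u).log hcu.ne').neg
      have hd2 : HasDerivAt (fun u : ℝ => c * Real.log ((π ^ 2 - 4 * u ^ 2) / π ^ 2))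
          (c * ((0 - 4 * (2 * u ^ (2 - 1))) / π ^ 2 / ((π ^ 2 - 4 * u ^ 2) / π ^ 2))) u := by
        refine HasDerivAt.const_mul c (HasDerivAt.log ?_ (div_pos hA (by positivity)).ne')
        exact ((hasDerivAt_const u (π ^ 2)).sub ((hasDerivAt_pow 2 u).const_mul 4)).div_const _
      rw [HasDerivAt.deriv (f := fun u => -Real.log (Real.cos u) + c * Real.log ((π ^ 2 - 4 * u ^ 2) / π ^ 2)) (hd1.add hd2)]
      have hlt : c < (π ^ 2 - 4 * u ^ 2) * Real.tan u / (8 * u) :=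
        h_anti ⟨hu0, hu2⟩ ⟨hx0, hx2⟩ hux
      have h8 : (0:ℝ) < 8 * u / (π ^ 2 - 4 * u ^ 2) := by positivity
      have h1 : c * (8 * u / (π ^ 2 - 4 * u ^ 2)) <
          (π ^ 2 - 4 * u ^ 2) * Real.tan u / (8 * u) * (8 * u / (π ^ 2 - 4 * u ^ 2)) :=
        mul_lt_mul_of_pos_right hlt h8
      have h2 : (π ^ 2 - 4 * u ^ 2) * Real.tan u / (8 * u) * (8 * u / (π ^ 2 - 4 * u ^ 2))
          = Real.tan u := by field_simp
      have h3 : -(-Real.sin u / Real.cos u)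
            + c * ((0 - 4 * (2 * u ^ (2 - 1))) / π ^ 2 / ((π ^ 2 - 4 * u ^ 2) / π ^ 2))
          = Real.tan u - c * (8 * u / (π ^ 2 - 4 * u ^ 2)) := by
        rw [Real.tan_eq_sin_div_cos]
        have hπ : π ≠ 0 := pi_ne_zero
        field_simp
        ring
      rw [h3]
      linarith [h1, h2 ▸ h1]
  have hmem0 : (0:ℝ) ∈ Icc 0 x := left_mem_Icc.mpr hx0.le
  have hmemx : x ∈ Icc (0:ℝ) x := right_mem_Icc.mpr hx0.le
  have := hψ hmem0 hmemx hx0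
  simp only [Real.cos_zero, Real.log_one] at this
  have hz : ((π ^ 2 - 4 * 0 ^ 2) / π ^ 2 : ℝ) = 1 := by
    rw [show (π ^ 2 - 4 * 0 ^ 2 : ℝ) = π ^ 2 by ring, div_self (by positivity)]
  rw [hz] at this
  simp only [Real.log_one, mul_zero, neg_zero, add_zero, zero_add] at this
  linarith

lemma phi_deriv {x : ℝ} (hx : x ∈ Ioo 0 (π / 2)) :
    ∃ d, HasDerivAt
      (fun y : ℝ => Real.log (Real.cos y) / Real.log ((π ^ 2 - 4 * y ^ 2) / π ^ 2)) d x ∧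
      d < 0 := by
  obtain ⟨hx0, hx2⟩ := hx
  have hc : 0 < Real.cos x := Real.cos_pos_of_mem_Ioo ⟨by linarith [pi_pos], hx2⟩
  have hc1 : Real.cos x < 1 := by
    have := Real.cos_lt_cos_of_nonneg_of_le_pi (le_refl 0) (by linarith [pi_pos]) hx0
    simpa using this
  have hA : 0 < π ^ 2 - 4 * x ^ 2 := by nlinarith [pi_pos]
  have haux : (π ^ 2 - 4 * x ^ 2) / π ^ 2 < 1 := by
    rw [div_lt_one (by positivity)]; nlinarith
  have hapos : 0 < (π ^ 2 - 4 * x ^ 2) / π ^ 2 := div_pos hA (by positivity)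
  have hf : Real.log (Real.cos x) < 0 := Real.log_neg hc hc1
  have hg : Real.log ((π ^ 2 - 4 * x ^ 2) / π ^ 2) < 0 := Real.log_neg hapos haux
  have hfd : HasDerivAt (fun y : ℝ => Real.log (Real.cos y)) (-Real.sin x / Real.cos x) x :=
    (Real.hasDerivAt_cos x).log hc.ne'
  have hgd : HasDerivAt (fun y : ℝ => Real.log ((π ^ 2 - 4 * y ^ 2) / π ^ 2))
      ((0 - 4 * (2 * x ^ (2 - 1))) / π ^ 2 / ((π ^ 2 - 4 * x ^ 2) / π ^ 2)) x := by
    refine HasDerivAt.log ?_ hapos.ne'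
    exact ((hasDerivAt_const x (π ^ 2)).sub ((hasDerivAt_pow 2 x).const_mul 4)).div_const _
  have hφ := hfd.div hgd hg.ne
  refine ⟨_, hφ, ?_⟩
  set f := Real.log (Real.cos x)
  set g := Real.log ((π ^ 2 - 4 * x ^ 2) / π ^ 2)
  have hkey : f < (π ^ 2 - 4 * x ^ 2) * Real.tan x / (8 * x) * g := key_ineq ⟨hx0, hx2⟩
  have hgd_eq : (0 - 4 * (2 * x ^ (2 - 1))) / π ^ 2 / ((π ^ 2 - 4 * x ^ 2) / π ^ 2)
      = -(8 * x) / (π ^ 2 - 4 * x ^ 2) := by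
    have hπ : π ≠ 0 := pi_ne_zero
    field_simp
    ring
  have h8 : (0:ℝ) < 8 * x / (π ^ 2 - 4 * x ^ 2) := by positivity
  have h1 : f * (8 * x / (π ^ 2 - 4 * x ^ 2)) <
      (π ^ 2 - 4 * x ^ 2) * Real.tan x / (8 * x) * g * (8 * x / (π ^ 2 - 4 * x ^ 2)) :=
    mul_lt_mul_of_pos_right hkey h8
  have h2 : (π ^ 2 - 4 * x ^ 2) * Real.tan x / (8 * x) * g * (8 * x / (π ^ 2 - 4 * x ^ 2))
      = Real.sin x / Real.cos x * g := by
    rw [Real.tan_eq_sin_div_cos]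
    field_simp
  have hnum : -Real.sin x / Real.cos x * g
      - f * ((0 - 4 * (2 * x ^ (2 - 1))) / π ^ 2 / ((π ^ 2 - 4 * x ^ 2) / π ^ 2)) < 0 := by
    rw [hgd_eq]
    have : f * (-(8 * x) / (π ^ 2 - 4 * x ^ 2)) = -(f * (8 * x / (π ^ 2 - 4 * x ^ 2))) := by
      ring
    rw [this]
    have hh := h2 ▸ h1
    have : -Real.sin x / Real.cos x * g = -(Real.sin x / Real.cos x * g) := by ring
    rw [this]
    linarith
  exact div_neg_of_neg_of_pos hnum (by nlinarith [mul_pos_of_neg_of_neg hg hg] : (0:ℝ) < g ^ 2)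

theorem stmt_10 :
    StrictAntiOn
      (fun x : ℝ => Real.log (Real.cos x) / Real.log ((π ^ 2 - 4 * x ^ 2) / π ^ 2))
      (Set.Ioo 0 (π / 2)) := by
  apply strictAntiOn_of_deriv_neg (convex_Ioo _ _)
  · intro x hx
    exact ((phi_deriv hx).choose_spec.1).differentiableAt.continuousAt.continuousWithinAt
  · intro x hx
    rw [interior_Ioo] at hx
    obtain ⟨d, hd, hneg⟩ := phi_deriv hx
    rwa [hd.deriv]
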